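/- Define r(N) = Γ((N+1)/2)/√(Γ(N+1)). Then there is a function θ with |θ(N)| bounded such that r(N) = (2π/N)^{1/4} · 2^{-N/2} · e^{θ(N)/N} for all N ≥ 1; in particular r(N) · 2^{N/2} · (N/(2π))^{1/4} → 1 as N → ∞. -/

import Mathlib

open Real Filter

-- midpoint log-convexity: Γ(y+1/2) * √y ≤ Γ(y+1) for y > 0
lemma gamma_half_le (y : ℝ) (hy : 0 < y) :
    Real.Gamma (y + 1/2) * Real.sqrt y ≤ Real.Gamma (y + 1) := by
  have h := Real.convexOn_log_Gamma.2 (Set.mem_Ioi.mpr hy)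
      (Set.mem_Ioi.mpr (by linarith : (0:ℝ) < y + 1))
      (by norm_num : (0:ℝ) ≤ 1/2) (by norm_num : (0:ℝ) ≤ 1/2) (by norm_num)
  simp only [smul_eq_mul, Function.comp_apply] at h
  have hmid : (1/2 : ℝ) * y + 1/2 * (y+1) = y + 1/2 := by ring
  rw [hmid] at h
  have hg1 : 0 < Real.Gamma y := Real.Gamma_pos_of_pos hy
  have hg2 : 0 < Real.Gamma (y+1) := Real.Gamma_pos_of_pos (by linarith)
  have hg3 : 0 < Real.Gamma (y+1/2) := Real.Gamma_pos_of_pos (by linarith)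
  have key : Real.Gamma (y + 1/2) ^ 2 ≤ Real.Gamma y * Real.Gamma (y+1) := by
    have h' := Real.exp_le_exp.mpr h
    rw [Real.exp_log hg3] at h'
    calc Real.Gamma (y+1/2)^2 = Real.Gamma (y+1/2) * Real.Gamma (y+1/2) := sq _
      _ ≤ Real.exp (1/2 * Real.log (Real.Gamma y) + 1/2 * Real.log (Real.Gamma (y+1)))
          * Real.exp (1/2 * Real.log (Real.Gamma y) + 1/2 * Real.log (Real.Gamma (y+1))) :=
          mul_le_mul h' h' hg3.le (Real.exp_pos _).le
      _ = Real.Gamma y * Real.Gamma (y+1) := by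
          rw [← Real.exp_add,
            show (1/2:ℝ) * Real.log (Real.Gamma y) + 1/2 * Real.log (Real.Gamma (y+1))
            + (1/2 * Real.log (Real.Gamma y) + 1/2 * Real.log (Real.Gamma (y+1)))
            = Real.log (Real.Gamma y) + Real.log (Real.Gamma (y+1)) by ring,
            Real.exp_add, Real.exp_log hg1, Real.exp_log hg2]
  have hgam : Real.Gamma y = Real.Gamma (y+1) / y := by
    rw [Real.Gamma_add_one hy.ne']; field_simp
  rw [hgam] at key
  have h2 : (Real.Gamma (y + 1/2) * Real.sqrt y)^2 ≤ Real.Gamma (y+1)^2 := by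
    rw [mul_pow, Real.sq_sqrt hy.le]
    calc Real.Gamma (y+1/2)^2 * y ≤ (Real.Gamma (y+1)/y * Real.Gamma (y+1)) * y :=
          mul_le_mul_of_nonneg_right key hy.le
      _ = Real.Gamma (y+1)^2 := by field_simp
  exact (pow_le_pow_iff_left₀ (by positivity) hg2.le two_ne_zero).mp h2

/-- the quantity `r(N)·2^{N/2}·(N/(2π))^{1/4}` -/
noncomputable def Efun (N : ℝ) : ℝ :=
  Real.Gamma ((N + 1) / 2) / Real.sqrt (Real.Gamma (N + 1))
    * (2:ℝ) ^ (N / 2) * (N / (2 * π)) ^ ((1:ℝ)/4)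

lemma Efun_pos (N : ℝ) (hN : 1 ≤ N) : 0 < Efun N := by
  have hN0 : (0:ℝ) < N := by linarith
  have ha : 0 < Real.Gamma ((N+1)/2) := Real.Gamma_pos_of_pos (by linarith)
  have hG : 0 < Real.Gamma (N+1) := Real.Gamma_pos_of_pos (by linarith)
  have hpi := Real.pi_pos
  exact mul_pos (mul_pos (div_pos ha (Real.sqrt_pos.mpr hG))
    (Real.rpow_pos_of_pos two_pos _)) (Real.rpow_pos_of_pos (by positivity) _)

lemma Efun_bounds (N : ℝ) (hN : 1 ≤ N) :
    Real.exp (-(1/N)) ≤ (Efun N)^4 ∧ (Efun N)^4 ≤ 1 := by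
  have hN0 : (0:ℝ) < N := by linarith
  have hpi := Real.pi_pos
  set a := Real.Gamma ((N+1)/2) with ha_def
  set b := Real.Gamma (N/2 + 1) with hb_def
  set G := Real.Gamma (N+1) with hG_def
  have ha : 0 < a := Real.Gamma_pos_of_pos (by linarith)
  have hb : 0 < b := Real.Gamma_pos_of_pos (by linarith)
  have hG : 0 < G := Real.Gamma_pos_of_pos (by linarith)
  have hsp : (0:ℝ) < Real.sqrt π := Real.sqrt_pos.mpr hpi
  have h2N : (0:ℝ) < (2:ℝ)^N := Real.rpow_pos_of_pos two_pos _
  -- duplication formula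
  have hdup : a * b = G * (2:ℝ)^(-N) * Real.sqrt π := by
    have h := Real.Gamma_mul_Gamma_add_half ((N+1)/2)
    rw [show (N+1)/2 + 1/2 = N/2 + 1 by ring, show 2*((N+1)/2) = N+1 by ring] at h
    rw [show 1 - (N+1) = -N by ring] at h
    exact h
  have hGeq : G = a * b * (2:ℝ)^N / Real.sqrt π := by
    rw [hdup, Real.rpow_neg (by norm_num : (0:ℝ) ≤ 2)]
    field_simp
  -- E^4 computation
  have ht4 : ((2:ℝ)^(N/2))^(4:ℕ) = (2:ℝ)^(2*N) := by
    rw [← Real.rpow_natCast ((2:ℝ)^(N/2)) 4, ← Real.rpow_mul (by norm_num : (0:ℝ) ≤ 2)]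
    norm_num
    ring_nf
  have hu4 : ((N/(2*π))^((1:ℝ)/4))^(4:ℕ) = N/(2*π) := by
    rw [← Real.rpow_natCast _ 4, ← Real.rpow_mul (by positivity)]
    norm_num
  have hs4 : (Real.sqrt G)^(4:ℕ) = G^2 := by
    rw [show (4:ℕ) = 2*2 from rfl, pow_mul, Real.sq_sqrt hG.le]
  have h2N2 : (2:ℝ)^(2*N) = ((2:ℝ)^N)^2 := by
    rw [← Real.rpow_natCast ((2:ℝ)^N) 2, ← Real.rpow_mul (by norm_num : (0:ℝ) ≤ 2)]
    norm_num
    ring_nf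
  have hsG : (0:ℝ) < Real.sqrt G := Real.sqrt_pos.mpr hG
  have hE4 : (Efun N)^4 = (a/b)^2 * (N/2) := by
    have : (Efun N)^4
        = (a / Real.sqrt G)^4 * ((2:ℝ)^(N/2))^(4:ℕ) * ((N/(2*π))^((1:ℝ)/4))^(4:ℕ) := by
      rw [Efun]; ring
    rw [this, ht4, hu4, div_pow, hs4, h2N2, hGeq]
    field_simp
    ring
    rw [Real.sq_sqrt hpi.le]
  -- bounds on a/b via log-convexity
  have hub : a * Real.sqrt (N/2) ≤ b := by
    have h := gamma_half_le (N/2) (by linarith)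
    rw [show N/2 + 1/2 = (N+1)/2 by ring] at h
    exact h
  have hlb : b * Real.sqrt ((N+1)/2) ≤ ((N+1)/2) * a := by
    have h := gamma_half_le ((N+1)/2) (by linarith)
    rw [show (N+1)/2 + 1/2 = N/2 + 1 by ring,
      Real.Gamma_add_one (by positivity : ((N+1)/2 : ℝ) ≠ 0)] at h
    exact h
  constructor
  · -- lower bound
    have hc : (0:ℝ) < (N+1)/2 := by linarith
    have hsq : b^2 * ((N+1)/2) ≤ ((N+1)/2)^2 * a^2 := by
      have := mul_le_mul hlb hlb (by positivity) (by positivity)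
      calc b^2 * ((N+1)/2) = (b * Real.sqrt ((N+1)/2)) * (b * Real.sqrt ((N+1)/2)) := by
            rw [show (b * Real.sqrt ((N+1)/2)) * (b * Real.sqrt ((N+1)/2))
              = b^2 * (Real.sqrt ((N+1)/2) * Real.sqrt ((N+1)/2)) by ring,
              Real.mul_self_sqrt hc.le]
        _ ≤ (((N+1)/2) * a) * (((N+1)/2) * a) := this
        _ = ((N+1)/2)^2 * a^2 := by ring
    have hb2 : b^2 ≤ ((N+1)/2) * a^2 := by nlinarith
    have hfrac : N/(N+1) ≤ (a/b)^2 * (N/2) := by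
      rw [div_pow]
      have hb2' : 0 < b^2 := by positivity
      rw [div_mul_eq_mul_div, le_div_iff₀ hb2']
      have : N/(N+1) * (((N+1)/2) * a^2) = a^2 * (N/2) := by field_simp
      nlinarith [mul_le_mul_of_nonneg_left hb2 (by positivity : (0:ℝ) ≤ N/(N+1))]
    have hexp : Real.exp (-(1/N)) ≤ N/(N+1) := by
      have h1 : 1/N + 1 ≤ Real.exp (1/N) := Real.add_one_le_exp _
      have h2 : (0:ℝ) < 1 + 1/N := by positivity
      rw [Real.exp_neg]
      have h3 : (Real.exp (1/N))⁻¹ ≤ (1 + 1/N)⁻¹ := by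
        apply inv_anti₀ h2
        linarith
      have h4 : (1 + 1/N)⁻¹ = N/(N+1) := by
        rw [inv_eq_one_div]
        rw [div_eq_div_iff (by positivity) (by positivity)]
        field_simp
      rw [h4] at h3
      linarith
    rw [hE4]
    linarith
  · -- upper bound
    have hsq : a^2 * (N/2) ≤ b^2 := by
      have := mul_le_mul hub hub (by positivity) hb.le
      calc a^2 * (N/2) = (a * Real.sqrt (N/2)) * (a * Real.sqrt (N/2)) := by
            rw [show (a * Real.sqrt (N/2)) * (a * Real.sqrt (N/2))
              = a^2 * (Real.sqrt (N/2) * Real.sqrt (N/2)) by ring,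
              Real.mul_self_sqrt (by linarith : (0:ℝ) ≤ N/2)]
        _ ≤ b * b := this
        _ = b^2 := (sq b).symm
    rw [hE4, div_pow, div_mul_eq_mul_div, div_le_one (by positivity)]
    linarith

noncomputable def thetaFun (N : ℝ) : ℝ := N * Real.log (Efun N)

lemma theta_bound (N : ℝ) (hN : 1 ≤ N) :
    -(1/(4*N)) ≤ Real.log (Efun N) ∧ Real.log (Efun N) ≤ 0 := by
  have hN0 : (0:ℝ) < N := by linarith
  obtain ⟨hlo, hhi⟩ := Efun_bounds N hN
  have hE : 0 < Efun N := Efun_pos N hN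
  have h1 : Real.log ((Efun N)^4) ≤ 0 := Real.log_nonpos (by positivity) hhi
  have h2 : -(1/N) ≤ Real.log ((Efun N)^4) :=
    (Real.le_log_iff_exp_le (by positivity)).mpr hlo
  rw [Real.log_pow] at h1 h2
  push_cast at h1 h2
  constructor
  · rw [neg_le]
    rw [show (1:ℝ)/(4*N) = (1/N)/4 by ring]
    rw [le_div_iff₀ (by norm_num : (0:ℝ) < 4)]
    linarith
  · linarith

lemma exp_theta (N : ℝ) (hN : 1 ≤ N) : Real.exp (thetaFun N / N) = Efun N := by
  have hN0 : (0:ℝ) < N := by linarith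
  rw [thetaFun, mul_div_cancel_left₀ _ hN0.ne', Real.exp_log (Efun_pos N hN)]

/-- for `r(N) = Γ((N+1)/2)/√(Γ(N+1))` there is a bounded `θ` with
`r(N) = (2π/N)^{1/4} 2^{-N/2} e^{θ(N)/N}` for `N ≥ 1`; in particular
`r(N) 2^{N/2} (N/(2π))^{1/4} → 1` as `N → ∞`. -/
theorem stmt7 :
    (∃ θ : ℝ → ℝ, ∃ M : ℝ, (∀ N : ℝ, 1 ≤ N → |θ N| ≤ M) ∧
      ∀ N : ℝ, 1 ≤ N →
        Real.Gamma ((N + 1) / 2) / Real.sqrt (Real.Gamma (N + 1))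
          = (2 * π / N) ^ ((1:ℝ)/4) * (2:ℝ) ^ (-(N / 2)) * Real.exp (θ N / N)) ∧
    Tendsto (fun N : ℝ =>
        Real.Gamma ((N + 1) / 2) / Real.sqrt (Real.Gamma (N + 1))
          * (2:ℝ) ^ (N / 2) * (N / (2 * π)) ^ ((1:ℝ)/4))
      atTop (nhds 1) := by
  have hpi := Real.pi_pos
  constructor
  · refine ⟨thetaFun, 1/4, fun N hN => ?_, fun N hN => ?_⟩
    · have hN0 : (0:ℝ) < N := by linarith
      obtain ⟨hlo, hhi⟩ := theta_bound N hN
      rw [abs_le]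
      constructor
      · have := mul_le_mul_of_nonneg_left hlo hN0.le
        rw [thetaFun]
        have hq : N * -(1/(4*N)) = -(1/4) := by field_simp
        nlinarith
      · rw [thetaFun]
        nlinarith
    · have hN0 : (0:ℝ) < N := by linarith
      rw [exp_theta N hN, Efun]
      have h1 : (2*π/N)^((1:ℝ)/4) * (N/(2*π))^((1:ℝ)/4) = 1 := by
        rw [← Real.mul_rpow (by positivity) (by positivity),
          show (2*π/N) * (N/(2*π)) = 1 by field_simp, Real.one_rpow]
      have h2 : (2:ℝ)^(-(N/2)) * (2:ℝ)^(N/2) = 1 := by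
        rw [← Real.rpow_add two_pos]; norm_num
      set r := Real.Gamma ((N + 1) / 2) / Real.sqrt (Real.Gamma (N + 1))
      calc r = r * ((2*π/N)^((1:ℝ)/4) * (N/(2*π))^((1:ℝ)/4))
              * ((2:ℝ)^(-(N/2)) * (2:ℝ)^(N/2)) := by rw [h1, h2]; ring
        _ = (2*π/N)^((1:ℝ)/4) * (2:ℝ)^(-(N/2)) * (r * (2:ℝ)^(N/2) * (N/(2*π))^((1:ℝ)/4)) := by
            ring
  · have hθ : Tendsto (fun N : ℝ => thetaFun N / N) atTop (nhds 0) := by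
      apply squeeze_zero_norm' (a := fun N : ℝ => (1/4) * N⁻¹)
      · filter_upwards [eventually_ge_atTop (1:ℝ)] with N hN
        have hN0 : (0:ℝ) < N := by linarith
        obtain ⟨hlo, hhi⟩ := theta_bound N hN
        rw [Real.norm_eq_abs, abs_div, abs_of_pos hN0, div_le_iff₀ hN0, thetaFun, abs_mul,
          abs_of_pos hN0]
        have hla : |Real.log (Efun N)| ≤ 1/(4*N) := by
          rw [abs_le]; constructor <;> linarith
        calc N * |Real.log (Efun N)| ≤ N * (1/(4*N)) :=
              mul_le_mul_of_nonneg_left hla hN0.le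
          _ = 1/4 := by field_simp
          _ ≤ 1/4 * N⁻¹ * N := by
              rw [mul_assoc, inv_mul_cancel₀ hN0.ne', mul_one]
      · have := tendsto_inv_atTop_zero (𝕜 := ℝ)
        have h := this.const_mul (1/4 : ℝ)
        simpa using h
    have hexp : Tendsto (fun N : ℝ => Real.exp (thetaFun N / N)) atTop (nhds 1) := by
      have := (Real.continuous_exp.tendsto 0).comp hθ
      rw [Real.exp_zero] at this
      exact this
    apply hexp.congr'
    filter_upwards [eventually_ge_atTop (1:ℝ)] with N hN
    rw [exp_theta N hN, Efun]
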